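/- Consider the logistic location family F_θ(x) := G(x − θ) with G(x) = 1/(1 + e^{−x/s}) for a known scale s > 0 and location parameter θ ∈ ℝ. Fix λ ∈ (0,1) and θ_0 ∈ ℝ, and let h_{λ,θ_0}(θ) := F_{θ_0}(F_θ^{−1}(λ)) = G(θ + G^{−1}(λ) − θ_0). Then the second derivative at θ = θ_0 of the rate function I_{λ,θ_0}(θ) := H(λ|h_{λ,θ_0}(θ)) equals I_{λ,θ_0}″(θ_0) = (G′(G^{−1}(λ)))²/(λ(1−λ)) = λ(1−λ)/s², and as a function of λ ∈ (0,1) it is uniquely maximized at λ = 1/2, with maximal value 1/(4s²). Moreover 1/(4s²) < 3/(π²s²), i.e. the value J_{θ_0}″(θ_0) = 3/(π²s²) for the MM estimator strictly exceeds I_{λ,θ_0}″(θ_0) for every λ ∈ (0,1). -/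

import Mathlib

open Set

/-- Relative entropy `H(p|q)` of the Bernoulli(`p`) law w.r.t. the Bernoulli(`q`) law. -/
noncomputable def relEntBer (p q : ℝ) : ℝ :=
  p * Real.log (p / q) + (1 - p) * Real.log ((1 - p) / (1 - q))

lemma expand_relEnt (s : ℝ) (l : ℝ) (hl0 : 0 < l) (hl1 : l < 1) (y : ℝ) :
    relEntBer l (1 / (1 + Real.exp (-y / s))) =
      (l * Real.log l + (1 - l) * Real.log (1 - l)) +
        (Real.log (1 + Real.exp (-y / s)) + (1 - l) * (y / s)) := by
  set E := Real.exp (-y / s) with hE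
  have hEpos : 0 < E := Real.exp_pos _
  have h1E : (0:ℝ) < 1 + E := by linarith
  have hq : (1:ℝ) - 1 / (1 + E) = E / (1 + E) := by field_simp; ring
  unfold relEntBer
  rw [hq]
  have hlog1 : Real.log (l / (1 / (1 + E))) = Real.log l + Real.log (1 + E) := by
    rw [Real.log_div hl0.ne' (by positivity), one_div, Real.log_inv]; ring
  have hlog2 : Real.log ((1 - l) / (E / (1 + E)))
      = Real.log (1 - l) - (Real.log E - Real.log (1 + E)) := by
    rw [Real.log_div (by linarith) (div_pos hEpos h1E).ne', Real.log_div hEpos.ne' h1E.ne']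
  have hlogE : Real.log E = -y / s := Real.log_exp _
  rw [hlog1, hlog2, hlogE]
  ring

lemma hasDeriv1 (s : ℝ) (l c θ : ℝ) :
    HasDerivAt (fun θ : ℝ => Real.log (1 + Real.exp (-(θ + c) / s)) + (1 - l) * ((θ + c) / s))
      (Real.exp (-(θ + c) / s) * (-1 / s) / (1 + Real.exp (-(θ + c) / s)) + (1 - l) * (1 / s))
      θ := by
  have h1E : (0:ℝ) < 1 + Real.exp (-(θ + c) / s) := by positivity
  have hlin : HasDerivAt (fun θ : ℝ => -(θ + c) / s) (-1 / s) θ :=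
    (((hasDerivAt_id θ).add_const c).neg).div_const s
  have hexp := hlin.exp
  have hden := hexp.const_add (1:ℝ)
  have hlog := hden.log h1E.ne'
  have hlin2 : HasDerivAt (fun θ : ℝ => (θ + c) / s) (1 / s) θ :=
    ((hasDerivAt_id θ).add_const c).div_const s
  have hmul := hlin2.const_mul (1 - l)
  exact hlog.add hmul

lemma hasDeriv2 (s : ℝ) (hs : 0 < s) (l c x : ℝ) :
    HasDerivAt (fun θ : ℝ =>
        Real.exp (-(θ + c) / s) * (-1 / s) / (1 + Real.exp (-(θ + c) / s)) + (1 - l) * (1 / s))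
      (Real.exp (-(x + c) / s) / (s ^ 2 * (1 + Real.exp (-(x + c) / s)) ^ 2)) x := by
  have h1E : (0:ℝ) < 1 + Real.exp (-(x + c) / s) := by positivity
  have hlin : HasDerivAt (fun θ : ℝ => -(θ + c) / s) (-1 / s) x :=
    (((hasDerivAt_id x).add_const c).neg).div_const s
  have hexp := hlin.exp
  have hnum := hexp.mul_const (-1 / s)
  have hden := hexp.const_add (1:ℝ)
  have hdiv := hnum.div hden h1E.ne'
  have := hdiv.add_const ((1 - l) * (1 / s))
  refine HasDerivAt.congr_deriv this ?_
  set E := Real.exp (-(x + c) / s) with hE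
  have hEpos : 0 < E := Real.exp_pos _
  have hs' : s ≠ 0 := hs.ne'
  field_simp
  ring

lemma curv_eq (s θ₀ : ℝ) (hs : 0 < s) (l : ℝ) (hl0 : 0 < l) (hl1 : l < 1)
    (G : ℝ → ℝ) (hG : ∀ x, G x = 1 / (1 + Real.exp (-x / s)))
    (Ginv : ℝ → ℝ) (hGinv : ∀ l, Ginv l = -s * Real.log (1 / l - 1))
    (h : ℝ → ℝ → ℝ) (hh : ∀ l θ, h l θ = G (θ + Ginv l - θ₀)) :
    deriv (deriv fun θ => relEntBer l (h l θ)) θ₀ = l * (1 - l) / s ^ 2 := by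
  set c := Ginv l - θ₀ with hc
  have hfun : (fun θ => relEntBer l (h l θ)) = fun θ =>
      (l * Real.log l + (1 - l) * Real.log (1 - l)) +
        (Real.log (1 + Real.exp (-(θ + c) / s)) + (1 - l) * ((θ + c) / s)) := by
    funext θ
    rw [hh, hG]
    have hθ : θ + Ginv l - θ₀ = θ + c := by rw [hc]; ring
    rw [hθ]
    exact expand_relEnt s l hl0 hl1 (θ + c)
  rw [hfun]
  have hd1 : (deriv fun θ =>
      (l * Real.log l + (1 - l) * Real.log (1 - l)) +
        (Real.log (1 + Real.exp (-(θ + c) / s)) + (1 - l) * ((θ + c) / s)))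
      = fun θ => Real.exp (-(θ + c) / s) * (-1 / s) / (1 + Real.exp (-(θ + c) / s))
          + (1 - l) * (1 / s) := by
    funext θ
    exact ((hasDeriv1 s l c θ).const_add _).deriv
  rw [hd1, (hasDeriv2 s hs l c θ₀).deriv]
  -- now compute the exponential at θ₀
  have hsum : θ₀ + c = Ginv l := by rw [hc]; ring
  have harg : -(θ₀ + c) / s = Real.log (1 / l - 1) := by
    rw [hsum, hGinv]
    field_simp
  have hpos : (0:ℝ) < 1 / l - 1 := by
    have : 1 < 1 / l := (one_lt_div hl0).mpr hl1
    linarith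
  have hexp : Real.exp (-(θ₀ + c) / s) = 1 / l - 1 := by
    rw [harg, Real.exp_log hpos]
  rw [hexp]
  have hl0' : l ≠ 0 := hl0.ne'
  have hs' : s ≠ 0 := hs.ne'
  field_simp
  ring

/-- Logistic location family `F_θ(x) = 1/(1 + e^{−(x−θ)/s})`: curvature of the
method-of-quantiles rate function at `θ₀`, uniquely maximized at `λ = 1/2` with value
`1/(4s²)`, which is smaller than the method-of-moments curvature `3/(π²s²)`. -/
theorem stmt_16 (s θ₀ : ℝ) (hs : 0 < s)
    (lam : ℝ) (hlam : lam ∈ Set.Ioo (0 : ℝ) 1)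
    (G : ℝ → ℝ) (hG : ∀ x, G x = 1 / (1 + Real.exp (-x / s)))
    (Ginv : ℝ → ℝ) (hGinv : ∀ l, Ginv l = -s * Real.log (1 / l - 1))
    (F : ℝ → ℝ → ℝ) (hF : ∀ θ x, F θ x = G (x - θ))
    -- `h l θ = F_{θ₀}(F_θ^{-1}(l)) = G(θ + G^{-1}(l) − θ₀)`
    (h : ℝ → ℝ → ℝ) (hh : ∀ l θ, h l θ = G (θ + Ginv l - θ₀))
    -- `curv l = I_{l,θ₀}''(θ₀)` where `I_{l,θ₀}(θ) = H(l | h_{l,θ₀}(θ))`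
    (curv : ℝ → ℝ)
    (hcurv : ∀ l, curv l = deriv (deriv fun θ => relEntBer l (h l θ)) θ₀) :
    curv lam = (deriv G (Ginv lam)) ^ 2 / (lam * (1 - lam)) ∧
    curv lam = lam * (1 - lam) / s ^ 2 ∧
    (∀ l ∈ Set.Ioo (0 : ℝ) 1, l ≠ 1 / 2 → curv l < curv (1 / 2)) ∧
    curv (1 / 2) = 1 / (4 * s ^ 2) ∧
    1 / (4 * s ^ 2) < 3 / (Real.pi ^ 2 * s ^ 2) := by
  have hs2 : (0:ℝ) < s ^ 2 := by positivity
  have hcv : ∀ l, 0 < l → l < 1 → curv l = l * (1 - l) / s ^ 2 := fun l h0 h1 => by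
    rw [hcurv]; exact curv_eq s θ₀ hs l h0 h1 G hG Ginv hGinv h hh
  obtain ⟨hlam0, hlam1⟩ := hlam
  have hcvlam := hcv lam hlam0 hlam1
  have hcvhalf := hcv (1/2) (by norm_num) (by norm_num)
  -- deriv G at Ginv lam
  have hderivG : deriv G (Ginv lam) = lam * (1 - lam) / s := by
    set a := Ginv lam with ha
    have hGfun : G = fun x : ℝ => 1 / (1 + Real.exp (-x / s)) := funext hG
    have h1E : (0:ℝ) < 1 + Real.exp (-a / s) := by positivity
    have hlin : HasDerivAt (fun x : ℝ => -x / s) (-1 / s) a := (hasDerivAt_id a).neg.div_const s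
    have hexp := hlin.exp
    have hden := hexp.const_add (1:ℝ)
    have hdiv := (hasDerivAt_const a (1:ℝ)).div hden h1E.ne'
    have hda : deriv G a = (0 * (1 + Real.exp (-a / s)) - 1 * (Real.exp (-a / s) * (-1 / s)))
        / (1 + Real.exp (-a / s)) ^ 2 := by
      rw [hGfun]; exact hdiv.deriv
    have hpos : (0:ℝ) < 1 / lam - 1 := by
      have : 1 < 1 / lam := (one_lt_div hlam0).mpr hlam1
      linarith
    have hexpval : Real.exp (-a / s) = 1 / lam - 1 := by
      have : -a / s = Real.log (1 / lam - 1) := by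
        rw [ha, hGinv]; field_simp
      rw [this, Real.exp_log hpos]
    rw [hda, hexpval]
    have hl0' : lam ≠ 0 := hlam0.ne'
    have hs' : s ≠ 0 := hs.ne'
    field_simp
    ring
  refine ⟨?_, hcvlam, ?_, ?_, ?_⟩
  · rw [hcvlam, hderivG]
    have hl0' : lam ≠ 0 := hlam0.ne'
    have hl1' : (1:ℝ) - lam ≠ 0 := by linarith
    field_simp
  · intro l hl hne
    rw [hcv l hl.1 hl.2, hcvhalf]
    have hsq : 0 < (l - 1/2) ^ 2 := by
      have : l - 1/2 ≠ 0 := sub_ne_zero.mpr hne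
      positivity
    have hlt : l * (1 - l) < 1/2 * (1 - 1/2) := by nlinarith
    exact (div_lt_div_iff_of_pos_right hs2).mpr hlt
  · rw [hcvhalf]; ring
  · have hpi : Real.pi < 3.15 := Real.pi_lt_d2
    have hpi2 : Real.pi ^ 2 < 12 := by nlinarith [Real.pi_pos]
    rw [div_lt_div_iff₀ (by positivity) (by positivity)]
    nlinarith [hs2]
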